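/- Let $0 < \theta_1 \leq \theta_2 \leq \cdots$ be a nondecreasing sequence, and let $X_1, X_2, \dots$ be independent exponentials with $X_i$ of rate $\theta_i$. For $n \geq \max_j a_j$ and distinct positive integers $a_1,\dots,a_k \leq n$, let $E_n$ be the event that $X_{a_1} > X_{a_2} > \cdots > X_{a_k} > X_i$ for all $i \in [n] \setminus \{a_1,\dots,a_k\}$. Then $\lim_{n\to\infty} P(E_n) = \int_{x_1 > x_2 > \cdots > x_k > 0} \prod_{j=1}^k \theta_{a_j}e^{-\theta_{a_j}x_j} \prod_{i \notin \{a_1,\dots,a_k\}} (1 - e^{-\theta_i x_k})\, dx_1\cdots dx_k$. -/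

import Mathlib

open MeasureTheory ProbabilityTheory Filter Finset
open Real
open scoped ENNReal Topology

section Aux

lemma lintegral_pi_prod' {n : ℕ} (ν : Fin n → Measure ℝ) [∀ i, SigmaFinite (ν i)]
    (f : Fin n → ℝ → ℝ≥0∞) (hf : ∀ i, Measurable (f i)) :
    ∫⁻ x : Fin n → ℝ, ∏ i, f i (x i) ∂Measure.pi ν = ∏ i, ∫⁻ x, f i x ∂ν i := by
  induction n with
  | zero =>
      rw [Measure.pi_of_empty]
      simp
  | succ n ih =>
      have hmp := measurePreserving_piFinSuccAbove ν 0
      have hmeas : Measurable fun p : ℝ × (Fin n → ℝ) =>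
          f 0 p.1 * ∏ i : Fin n, f (Fin.succ i) (p.2 i) := by
        apply Measurable.mul
        · exact (hf 0).comp measurable_fst
        · exact (Finset.measurable_prod _ fun i _ =>
            (hf _).comp ((measurable_pi_apply i).comp measurable_snd))
      calc ∫⁻ x : Fin (n+1) → ℝ, ∏ i, f i (x i) ∂Measure.pi ν
          = ∫⁻ p : ℝ × (Fin n → ℝ), f 0 p.1 * ∏ i : Fin n, f (Fin.succ i) (p.2 i)
              ∂((ν 0).prod (Measure.pi fun i => ν (Fin.succAbove 0 i))) := by
            rw [← hmp.lintegral_comp hmeas]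
            congr 1
            funext x
            rw [Fin.prod_univ_succ]
            simp [MeasurableEquiv.piFinSuccAbove, Fin.zero_succAbove, Fin.tail]
        _ = (∫⁻ x, f 0 x ∂ν 0) * ∫⁻ y : Fin n → ℝ, ∏ i, f (Fin.succ i) (y i)
              ∂(Measure.pi fun i => ν (Fin.succAbove 0 i)) := by
            exact lintegral_prod_mul (hf 0).aemeasurable
              (Finset.measurable_prod _ fun i _ =>
                (hf _).comp (measurable_pi_apply i)).aemeasurable
        _ = ∏ i, ∫⁻ x, f i x ∂ν i := by
            rw [ih (fun i => ν (Fin.succAbove 0 i)) (fun i => f (Fin.succ i)) (fun i => hf _)]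
            rw [Fin.prod_univ_succ]
            simp [Fin.zero_succAbove]

lemma pi_withDensity' {n : ℕ} (ν : Fin n → Measure ℝ) [∀ i, SigmaFinite (ν i)]
    (f : Fin n → ℝ → ℝ≥0∞) (hf : ∀ i, Measurable (f i))
    [∀ i, SigmaFinite ((ν i).withDensity (f i))] :
    Measure.pi (fun i => (ν i).withDensity (f i))
      = (Measure.pi ν).withDensity (fun x => ∏ i, f i (x i)) := by
  refine Measure.pi_eq fun s hs => ?_
  rw [withDensity_apply _ (MeasurableSet.univ_pi hs), ← lintegral_indicator
    (MeasurableSet.univ_pi hs)]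
  have : (Set.univ.pi s).indicator (fun x => ∏ i, f i (x i))
      = fun x : Fin n → ℝ => ∏ i, (s i).indicator (f i) (x i) := by
    funext x
    by_cases hx : x ∈ Set.univ.pi s
    · rw [Set.indicator_of_mem hx]
      exact Finset.prod_congr rfl fun i _ =>
        (Set.indicator_of_mem (hx i (Set.mem_univ i)) _).symm
    · rw [Set.indicator_of_notMem hx]
      have hx' : ∃ i, x i ∉ s i := by
        by_contra hcon
        push_neg at hcon
        exact hx fun i _ => hcon i
      obtain ⟨i, hi⟩ := hx'
      exact (Finset.prod_eq_zero (Finset.mem_univ i)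
        (by rw [Set.indicator_of_notMem hi])).symm
  rw [this, lintegral_pi_prod' ν _ (fun i => (hf i).indicator (hs i))]
  exact Finset.prod_congr rfl fun i _ => by
    rw [lintegral_indicator (hs i), ← withDensity_apply _ (hs i)]

lemma joint_law' {Ω : Type*} [MeasurableSpace Ω] (P : Measure Ω) [IsProbabilityMeasure P]
    (X : ℕ → Ω → ℝ) (hmeas : ∀ i, Measurable (X i))
    (hindep : iIndepFun X P)
    (μ : ℕ → Measure ℝ) [∀ i, IsProbabilityMeasure (μ i)]
    (hlaw : ∀ i, Measure.map (X i) P = μ i)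
    {ι : Type*} [Fintype ι] (e : ι → ℕ) (he : Function.Injective e) :
    Measure.map (fun ω (i : ι) => X (e i) ω) P = Measure.pi (fun i => μ (e i)) := by
  classical
  refine (Measure.pi_eq fun s hs => ?_).symm
  rw [Measure.map_apply (measurable_pi_lambda _ fun i => hmeas (e i))
    (MeasurableSet.univ_pi hs)]
  have hpre : (fun ω (i : ι) => X (e i) ω) ⁻¹' (Set.univ.pi s)
      = ⋂ i ∈ (Finset.univ : Finset ι), X (e i) ⁻¹' s i := by
    ext ω; simp [Set.mem_pi]
  set T : ℕ → Set ℝ := fun m => ⋂ i ∈ Finset.univ.filter fun i => e i = m, s i with hT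
  have hTmeas : ∀ m, MeasurableSet (T m) := fun m =>
    MeasurableSet.biInter (Finset.countable_toSet _) fun i _ => hs i
  have hTe : ∀ i, T (e i) = s i := by
    intro i
    simp [hT, he.eq_iff]
  have key := hindep.meas_biInter (S := Finset.image e Finset.univ)
    (s := fun m => X m ⁻¹' T m) (fun m _ => ⟨T m, hTmeas m, rfl⟩)
  rw [Finset.set_biInter_finset_image] at key
  rw [Finset.prod_image (fun i _ j _ h => he h)] at key
  simp only [hTe] at key
  rw [hpre, key]
  exact Finset.prod_congr rfl fun i _ => by
    rw [← hlaw (e i), Measure.map_apply (hmeas (e i)) (hs i)]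

lemma expMeasure_def' (r : ℝ) : expMeasure r = volume.withDensity (exponentialPDF r) := rfl

lemma expMeasure_Iio' {r : ℝ} (hr : 0 < r) (c : ℝ) :
    expMeasure r (Set.Iio c) = ENNReal.ofReal (if 0 ≤ c then 1 - rexp (-(r * c)) else 0) := by
  rw [expMeasure_def', withDensity_apply _ measurableSet_Iio,
    Measure.restrict_congr_set Iio_ae_eq_Iic, lintegral_exponentialPDF_eq_antiDeriv hr]

lemma expMeasure_Iic_zero' {r : ℝ} (hr : 0 < r) : expMeasure r (Set.Iic 0) = 0 := by
  rw [expMeasure_def', withDensity_apply _ measurableSet_Iic,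
    lintegral_exponentialPDF_eq_antiDeriv hr]
  simp

lemma multipliable_of_le_one' {h : ℕ → ℝ} (h0 : ∀ i, 0 ≤ h i) (h1 : ∀ i, h i ≤ 1) :
    Multipliable h := by
  refine ⟨⨅ s : Finset ℕ, ∏ i ∈ s, h i, tendsto_atTop_ciInf ?_ ?_⟩
  · intro s t hst
    simp only []
    rw [← Finset.prod_sdiff hst]
    exact mul_le_of_le_one_left (Finset.prod_nonneg fun i _ => h0 i)
      (Finset.prod_le_one (fun i _ => h0 i) (fun i _ => h1 i))
  · exact ⟨0, fun x ⟨s, hs⟩ => hs ▸ Finset.prod_nonneg fun i _ => h0 i⟩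

lemma tendsto_prod_range' {h : ℕ → ℝ} (h0 : ∀ i, 0 ≤ h i) (h1 : ∀ i, h i ≤ 1) :
    Tendsto (fun n => ∏ i ∈ Finset.range n, h i) atTop (𝓝 (∏' i, h i)) :=
  (multipliable_of_le_one' h0 h1).hasProd.tendsto_prod_nat

lemma tprod_nonneg' {h : ℕ → ℝ} (h0 : ∀ i, 0 ≤ h i) (h1 : ∀ i, h i ≤ 1) :
    0 ≤ ∏' i, h i :=
  ge_of_tendsto' (tendsto_prod_range' h0 h1) fun _ => Finset.prod_nonneg fun i _ => h0 i

lemma tprod_le_one' {h : ℕ → ℝ} (h0 : ∀ i, 0 ≤ h i) (h1 : ∀ i, h i ≤ 1) :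
    ∏' i, h i ≤ 1 :=
  le_of_tendsto' (tendsto_prod_range' h0 h1) fun _ =>
    Finset.prod_le_one (fun i _ => h0 i) (fun i _ => h1 i)

end Aux


/-- for independent exponentials `X i` of rate `θ i` (with `θ`
nondecreasing) and distinct indices `a 0, …, a (k-1)`, the probability that
`X (a 0) > X (a 1) > ⋯ > X (a (k-1)) > X i` for all other `i < n` converges, as
`n → ∞`, to the stated integral. -/
theorem limit_prob_last_k (θ : ℕ → ℝ) (hpos : ∀ i, 0 < θ i) (hmono : Monotone θ)
    {Ω : Type*} [MeasurableSpace Ω] (P : Measure Ω) [IsProbabilityMeasure P]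
    (X : ℕ → Ω → ℝ) (hmeas : ∀ i, Measurable (X i))
    (hindep : iIndepFun X P)
    (hlaw : ∀ i, Measure.map (X i) P = expMeasure (θ i))
    (k : ℕ) (hk : 0 < k) (a : Fin k → ℕ) (ha : Function.Injective a) :
    Tendsto (fun n : ℕ =>
        (P {ω | (∀ j₁ j₂ : Fin k, j₁ < j₂ → X (a j₂) ω < X (a j₁) ω) ∧
            ∀ i < n, i ∉ Finset.image a Finset.univ →
              X i ω < X (a ⟨k - 1, by omega⟩) ω}).toReal)
      atTop
      (nhds (∫ x : Fin k → ℝ in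
          {x | StrictAnti x ∧ 0 < x ⟨k - 1, by omega⟩},
        (∏ j : Fin k, θ (a j) * Real.exp (-(θ (a j)) * x j)) *
          ∏' i : ℕ, if i ∈ Finset.image a Finset.univ then 1
            else 1 - Real.exp (-(θ i) * x ⟨k - 1, by omega⟩))) := by
  classical
  haveI hPM : ∀ i : ℕ, IsProbabilityMeasure (expMeasure (θ i)) :=
    fun i => isProbabilityMeasure_expMeasure (hpos i)
  set A : Finset ℕ := Finset.image a Finset.univ with hA
  have hmemA : ∀ j, a j ∈ A := fun j => Finset.mem_image.2 ⟨j, Finset.mem_univ j, rfl⟩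
  set la : Fin k := ⟨k - 1, by omega⟩ with hla
  set R : Set (Fin k → ℝ) := {x | StrictAnti x ∧ 0 < x la} with hR
  set D : (Fin k → ℝ) → ℝ := fun x => ∏ j : Fin k, θ (a j) * Real.exp (-(θ (a j)) * x j)
    with hD
  set h : ℝ → ℕ → ℝ := fun c i => if i ∈ A then 1 else 1 - Real.exp (-(θ i) * c) with hh
  -- basic measurability
  have hSAmeas : MeasurableSet {x : Fin k → ℝ | StrictAnti x} := by
    have hrw : {x : Fin k → ℝ | StrictAnti x}
        = ⋂ p : Fin k, ⋂ q : Fin k, {x | p < q → x q < x p} := by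
      ext x
      simp only [Set.mem_setOf_eq, Set.mem_iInter]
      exact ⟨fun hx p q hpq => hx hpq, fun hx p q hpq => hx p q hpq⟩
    rw [hrw]
    refine MeasurableSet.iInter fun p => MeasurableSet.iInter fun q => ?_
    by_cases hpq : p < q
    · have : {x : Fin k → ℝ | p < q → x q < x p} = {x | x q < x p} := by
        ext x; simp [hpq]
      rw [this]
      exact measurableSet_lt (measurable_pi_apply q) (measurable_pi_apply p)
    · have : {x : Fin k → ℝ | p < q → x q < x p} = Set.univ := by
        ext x; simp [hpq]
      rw [this]
      exact MeasurableSet.univ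
  have hRmeas : MeasurableSet R := by
    rw [hR]
    exact hSAmeas.inter (measurableSet_lt measurable_const (measurable_pi_apply la))
  have hcoordpos : ∀ x ∈ R, ∀ j : Fin k, 0 < x j := by
    rintro x ⟨hxa, hxl⟩ j
    refine lt_of_lt_of_le hxl (hxa.antitone ?_)
    rw [Fin.le_def]
    simp only [hla]
    omega
  have hD0 : ∀ x, 0 ≤ D x := fun x =>
    Finset.prod_nonneg fun j _ => mul_nonneg (hpos _).le (Real.exp_pos _).le
  have hDmeas : Measurable D := by
    refine Finset.measurable_prod _ fun j _ => ?_
    exact (Real.measurable_exp.comp ((measurable_pi_apply j).const_mul _)).const_mul _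
  have hhim : ∀ i, Measurable fun c : ℝ => h c i := by
    intro i
    by_cases hi : i ∈ A
    · simp only [hh, hi, if_true]; exact measurable_const
    · simp only [hh, hi, if_false]
      exact measurable_const.sub (Real.measurable_exp.comp (measurable_id.const_mul _))
  have hgmeas : ∀ n : ℕ, Measurable fun x : Fin k → ℝ => ∏ i ∈ Finset.range n, h (x la) i :=
    fun n => Finset.measurable_prod _ fun i _ => (hhim i).comp (measurable_pi_apply la)
  -- bounds on the factors on R
  have hh0 : ∀ (c : ℝ), 0 < c → ∀ i, 0 ≤ h c i := by
    intro c hc i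
    by_cases hi : i ∈ A
    · simp [hh, hi]
    · simp only [hh, hi, if_false, sub_nonneg]
      exact Real.exp_le_one_iff.mpr (by nlinarith [(hpos i).le])
  have hh1 : ∀ (c : ℝ) (i : ℕ), h c i ≤ 1 := by
    intro c i
    by_cases hi : i ∈ A
    · simp [hh, hi]
    · simp only [hh, hi, if_false]
      linarith [Real.exp_pos (-(θ i) * c)]
  -- the exponential pdf product
  set Dpdf : (Fin k → ℝ) → ℝ≥0∞ := fun x => ∏ j : Fin k, exponentialPDF (θ (a j)) (x j)
    with hDpdf
  have hDpdfmeas : Measurable Dpdf := by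
    refine Finset.measurable_prod _ fun j _ => ?_
    exact ((measurable_exponentialPDFReal (θ (a j))).comp
      (measurable_pi_apply j)).ennreal_ofReal
  have hDpdf_eq : ∀ x ∈ R, Dpdf x = ENNReal.ofReal (D x) := by
    intro x hx
    rw [hDpdf, hD]
    rw [ENNReal.ofReal_prod_of_nonneg
      (fun j _ => mul_nonneg (hpos _).le (Real.exp_pos _).le)]
    refine Finset.prod_congr rfl fun j _ => ?_
    rw [exponentialPDF_of_nonneg (hcoordpos x hx j).le, neg_mul]
  -- μ₁ equals volume with density Dpdf
  have hμ₁ : Measure.pi (fun j : Fin k => expMeasure (θ (a j)))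
      = (volume : Measure (Fin k → ℝ)).withDensity Dpdf := by
    haveI : ∀ j : Fin k,
        SigmaFinite (volume.withDensity (exponentialPDF (θ (a j)))) := by
      intro j
      have : IsProbabilityMeasure (volume.withDensity (exponentialPDF (θ (a j)))) := by
        rw [← expMeasure_def']; exact hPM (a j)
      infer_instance
    calc Measure.pi (fun j : Fin k => expMeasure (θ (a j)))
        = Measure.pi (fun j : Fin k => volume.withDensity (exponentialPDF (θ (a j)))) := rfl
      _ = (Measure.pi fun _ : Fin k => volume).withDensity Dpdf :=
          pi_withDensity' _ _ (fun j => (measurable_exponentialPDFReal _).ennreal_ofReal)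
      _ = (volume : Measure (Fin k → ℝ)).withDensity Dpdf := by rw [← volume_pi]
  -- bound integral is finite
  have hbound_le : ∫⁻ x in R, ENNReal.ofReal (D x) ∂(volume) ≤ 1 := by
    have h1 : ∫⁻ x in R, ENNReal.ofReal (D x) ∂(volume : Measure (Fin k → ℝ))
        = ∫⁻ x in R, Dpdf x ∂(volume) := by
      refine setLIntegral_congr_fun hRmeas (fun x hx => ?_)
      exact (hDpdf_eq x hx).symm
    rw [h1]
    calc ∫⁻ x in R, Dpdf x ∂(volume : Measure (Fin k → ℝ))
        ≤ ∫⁻ x, Dpdf x ∂(volume) := setLIntegral_le_lintegral _ _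
      _ = ∏ j : Fin k, ∫⁻ y, exponentialPDF (θ (a j)) y ∂(volume) := by
          rw [volume_pi]
          exact lintegral_pi_prod' _ _
            (fun j => (measurable_exponentialPDFReal _).ennreal_ofReal)
      _ = 1 := by
          rw [Finset.prod_congr rfl fun j _ => lintegral_exponentialPDF_eq_one (hpos (a j))]
          simp
  -- KEY: identification of P of the event for each n
  have key : ∀ n : ℕ,
      P {ω | (∀ j₁ j₂ : Fin k, j₁ < j₂ → X (a j₂) ω < X (a j₁) ω) ∧
          ∀ i < n, i ∉ A → X i ω < X (a la) ω}
        = ∫⁻ x in R, ENNReal.ofReal (D x)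
            * ENNReal.ofReal (∏ i ∈ Finset.range n, h (x la) i) ∂(volume) := by
    intro n
    set Sn : Finset ℕ := (Finset.range n).filter (fun i => i ∉ A) with hSn
    haveI : ∀ i : {i // i ∈ Sn}, IsProbabilityMeasure (expMeasure (θ i.1)) :=
      fun i => hPM i.1
    set μ₁ : Measure (Fin k → ℝ) := Measure.pi (fun j : Fin k => expMeasure (θ (a j)))
      with hμ₁def
    set μ₂ : Measure ({i // i ∈ Sn} → ℝ) :=
      Measure.pi (fun i : {i // i ∈ Sn} => expMeasure (θ i.1)) with hμ₂def
    haveI : IsProbabilityMeasure μ₁ := by rw [hμ₁def]; infer_instance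
    haveI : IsProbabilityMeasure μ₂ := by rw [hμ₂def]; infer_instance
    set V₁ : Ω → Fin k → ℝ := fun ω j => X (a j) ω with hV₁
    set V₂ : Ω → {i // i ∈ Sn} → ℝ := fun ω i => X i.1 ω with hV₂
    have hV₁meas : Measurable V₁ := measurable_pi_lambda _ fun j => hmeas (a j)
    have hV₂meas : Measurable V₂ := measurable_pi_lambda _ fun i => hmeas i.1
    have h₁ : Measure.map V₁ P = μ₁ :=
      joint_law' P X hmeas hindep _ hlaw a ha
    have h₂ : Measure.map V₂ P = μ₂ :=
      joint_law' P X hmeas hindep _ hlaw (Subtype.val : {i // i ∈ Sn} → ℕ)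
        Subtype.val_injective
    -- independence of the two blocks
    have hST : Disjoint A Sn := by
      rw [Finset.disjoint_left]
      intro i hiA hiS
      exact (Finset.mem_filter.mp hiS).2 hiA
    have base := hindep.indepFun_finset A Sn hST hmeas
    have hIndep : IndepFun V₁ V₂ P := by
      have hφ : Measurable fun (y : {i // i ∈ A} → ℝ) (j : Fin k) =>
          y ⟨a j, hmemA j⟩ := measurable_pi_lambda _ fun j => measurable_pi_apply _
      have := base.comp hφ measurable_id
      exact this
    have hW : Measure.map (fun ω => (V₁ ω, V₂ ω)) P = μ₁.prod μ₂ := by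
      rw [← h₁, ← h₂]
      exact (indepFun_iff_map_prod_eq_prod_map_map hV₁meas.aemeasurable
        hV₂meas.aemeasurable).mp hIndep
    -- the event as a preimage
    set C₀ : Set ((Fin k → ℝ) × ({i // i ∈ Sn} → ℝ)) :=
      {p | StrictAnti p.1} ∩ ⋂ i : {i // i ∈ Sn}, {p | p.2 i < p.1 la} with hC₀
    have hC₀meas : MeasurableSet C₀ := by
      refine (hSAmeas.preimage measurable_fst).inter ?_
      exact MeasurableSet.iInter fun i => measurableSet_lt
        (measurable_snd.eval) (measurable_fst.eval)
    have hevent : {ω | (∀ j₁ j₂ : Fin k, j₁ < j₂ → X (a j₂) ω < X (a j₁) ω) ∧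
          ∀ i < n, i ∉ A → X i ω < X (a la) ω}
        = (fun ω => (V₁ ω, V₂ ω)) ⁻¹' C₀ := by
      ext ω
      simp only [Set.mem_setOf_eq, Set.mem_preimage, hC₀, Set.mem_inter_iff,
        Set.mem_iInter, Set.mem_setOf_eq]
      constructor
      · rintro ⟨hord, hrest⟩
        refine ⟨fun p q hpq => hord p q hpq, fun i => ?_⟩
        have hi := Finset.mem_filter.mp i.2
        exact hrest i.1 (Finset.mem_range.mp hi.1) hi.2
      · rintro ⟨hord, hrest⟩
        refine ⟨fun p q hpq => hord hpq, fun i hin hiA => ?_⟩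
        exact hrest ⟨i, Finset.mem_filter.mpr ⟨Finset.mem_range.mpr hin, hiA⟩⟩
    -- compute
    rw [hevent, ← Measure.map_apply (hV₁meas.prodMk hV₂meas) hC₀meas, hW]
    -- restrict to positive last coordinate
    set C' : Set ((Fin k → ℝ) × ({i // i ∈ Sn} → ℝ)) :=
      C₀ ∩ (Prod.fst ⁻¹' {x : Fin k → ℝ | 0 < x la}) with hC'
    have hC'meas : MeasurableSet C' :=
      hC₀meas.inter ((measurableSet_lt measurable_const
        (measurable_pi_apply la)).preimage measurable_fst)
    have hμ₁neg : μ₁ {x : Fin k → ℝ | x la ≤ 0} = 0 := by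
      have hset : {x : Fin k → ℝ | x la ≤ 0}
          = Set.univ.pi (fun j : Fin k => if j = la then Set.Iic 0 else Set.univ) := by
        ext x
        simp only [Set.mem_setOf_eq, Set.mem_pi, Set.mem_univ, forall_true_left]
        constructor
        · intro hx j
          by_cases hj : j = la
          · subst hj; simp [hx]
          · simp [hj]
        · intro hx
          have := hx la
          simpa using this
      rw [hμ₁def, hset, Measure.pi_pi]
      refine Finset.prod_eq_zero (Finset.mem_univ la) ?_
      simp [expMeasure_Iic_zero' (hpos (a la))]
    have hdiff : (μ₁.prod μ₂) C₀ = (μ₁.prod μ₂) C' := by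
      refine le_antisymm ?_ (measure_mono Set.inter_subset_left)
      calc (μ₁.prod μ₂) C₀ ≤ (μ₁.prod μ₂) (C' ∪ ({x : Fin k → ℝ | x la ≤ 0} ×ˢ Set.univ)) := by
            refine measure_mono fun p hp => ?_
            by_cases hpos' : 0 < p.1 la
            · exact Or.inl ⟨hp, hpos'⟩
            · exact Or.inr ⟨not_lt.mp hpos', Set.mem_univ _⟩
        _ ≤ (μ₁.prod μ₂) C' + (μ₁.prod μ₂) ({x : Fin k → ℝ | x la ≤ 0} ×ˢ Set.univ) :=
            measure_union_le _ _
        _ = (μ₁.prod μ₂) C' := by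
            rw [Measure.prod_prod, hμ₁neg, zero_mul, add_zero]
    rw [hdiff]
    -- Fubini
    rw [Measure.prod_apply hC'meas]
    have hsection : ∀ x : Fin k → ℝ, μ₂ (Prod.mk x ⁻¹' C')
        = R.indicator (fun x => ∏ i : {i // i ∈ Sn}, expMeasure (θ i.1)
            (Set.Iio (x la))) x := by
      intro x
      by_cases hx : x ∈ R
      · have hxR := hx
        rw [hR] at hxR
        have hpre : Prod.mk x ⁻¹' C'
            = Set.univ.pi (fun _ : {i // i ∈ Sn} => Set.Iio (x la)) := by
          ext z
          simp only [hC', hC₀, Set.mem_preimage, Set.mem_inter_iff, Set.mem_setOf_eq,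
            Set.mem_iInter, Set.mem_pi, Set.mem_univ, forall_true_left, Set.mem_Iio]
          exact ⟨fun hz i => hz.1.2 i, fun hz => ⟨⟨hxR.1, fun i => hz i⟩, hxR.2⟩⟩
        rw [hpre, Measure.pi_pi, Set.indicator_of_mem hx]
      · have hpre : Prod.mk x ⁻¹' C' = ∅ := by
          ext z
          simp only [hC', hC₀, Set.mem_preimage, Set.mem_inter_iff, Set.mem_setOf_eq,
            Set.mem_iInter, Set.mem_empty_iff_false, iff_false]
          rintro ⟨⟨hz1, -⟩, hz2⟩
          exact hx ⟨hz1, hz2⟩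
        rw [hpre, measure_empty, Set.indicator_of_notMem hx]
    rw [lintegral_congr hsection, lintegral_indicator hRmeas]
    -- identify the inner product with the elementary formula
    have hinner : ∀ x ∈ R,
        (∏ i : {i // i ∈ Sn}, expMeasure (θ i.1) (Set.Iio (x la)))
          = ENNReal.ofReal (∏ i ∈ Finset.range n, h (x la) i) := by
      intro x hx
      have hxl : 0 < x la := (by rw [hR] at hx; exact hx.2)
      have hfac : ∀ i : ℕ, expMeasure (θ i) (Set.Iio (x la))
          = ENNReal.ofReal (1 - Real.exp (-(θ i) * x la)) := by
        intro i
        rw [expMeasure_Iio' (hpos i), if_pos hxl.le, neg_mul]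
      calc (∏ i : {i // i ∈ Sn}, expMeasure (θ i.1) (Set.Iio (x la)))
          = ∏ i : {i // i ∈ Sn}, ENNReal.ofReal (1 - Real.exp (-(θ i.1) * x la)) :=
            Finset.prod_congr rfl fun i _ => hfac i.1
        _ = ∏ i ∈ Sn, ENNReal.ofReal (1 - Real.exp (-(θ i) * x la)) :=
            (Finset.prod_subtype Sn (fun i => Iff.rfl)
              (fun i => ENNReal.ofReal (1 - Real.exp (-(θ i) * x la)))).symm
        _ = ENNReal.ofReal (∏ i ∈ Sn, (1 - Real.exp (-(θ i) * x la))) := by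
            rw [ENNReal.ofReal_prod_of_nonneg]
            intro i _
            refine sub_nonneg.mpr (Real.exp_le_one_iff.mpr ?_)
            nlinarith [hpos i, hxl]
        _ = ENNReal.ofReal (∏ i ∈ Finset.range n, h (x la) i) := by
            congr 1
            rw [hSn, Finset.prod_filter]
            refine Finset.prod_congr rfl fun i _ => ?_
            by_cases hi : i ∈ A <;> simp [hh, hi]
    rw [setLIntegral_congr_fun hRmeas hinner]
    -- change measure to Lebesgue with density
    rw [hμ₁, restrict_withDensity hRmeas,
      lintegral_withDensity_eq_lintegral_mul _ hDpdfmeas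
        ((hgmeas n).ennreal_ofReal)]
    refine setLIntegral_congr_fun hRmeas (fun x hx => ?_)
    simp only [Pi.mul_apply]
    rw [hDpdf_eq x hx]
  -- limit of the lintegrals
  set T : (Fin k → ℝ) → ℝ := fun x => ∏' i, h (x la) i with hT
  set Linf : ℝ≥0∞ :=
    ∫⁻ x in R, ENNReal.ofReal (D x) * ENNReal.ofReal (T x) ∂(volume) with hLinf
  have hlimreal : ∀ x ∈ R,
      Tendsto (fun n => ∏ i ∈ Finset.range n, h (x la) i) atTop (𝓝 (T x)) := by
    intro x hx
    have hxl : 0 < x la := (by rw [hR] at hx; exact hx.2)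
    exact tendsto_prod_range' (hh0 _ hxl) (fun i => hh1 _ i)
  have htendsto : Tendsto (fun n => ∫⁻ x in R, ENNReal.ofReal (D x)
      * ENNReal.ofReal (∏ i ∈ Finset.range n, h (x la) i) ∂(volume)) atTop (𝓝 Linf) := by
    refine tendsto_lintegral_of_dominated_convergence
      (bound := fun x => ENNReal.ofReal (D x))
      (fun n => (hDmeas.ennreal_ofReal.mul ((hgmeas n).ennreal_ofReal))) ?_ ?_ ?_
    · intro n
      filter_upwards [ae_restrict_mem hRmeas] with x hx
      have hxl : 0 < x la := (by rw [hR] at hx; exact hx.2)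
      calc ENNReal.ofReal (D x) * ENNReal.ofReal (∏ i ∈ Finset.range n, h (x la) i)
          ≤ ENNReal.ofReal (D x) * 1 := by
            refine mul_le_mul_right ?_ _
            exact ENNReal.ofReal_le_one.mpr
              (Finset.prod_le_one (fun i _ => hh0 _ hxl i) (fun i _ => hh1 _ i))
        _ = ENNReal.ofReal (D x) := mul_one _
    · exact ne_top_of_le_ne_top ENNReal.one_ne_top hbound_le
    · filter_upwards [ae_restrict_mem hRmeas] with x hx
      exact ENNReal.Tendsto.const_mul
        ((ENNReal.continuous_ofReal.tendsto _).comp (hlimreal x hx))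
        (Or.inr ENNReal.ofReal_ne_top)
  have hLinf_ne : Linf ≠ ⊤ := by
    refine ne_top_of_le_ne_top ENNReal.one_ne_top (le_trans ?_ hbound_le)
    refine lintegral_mono_ae ?_
    filter_upwards [ae_restrict_mem hRmeas] with x hx
    have hxl : 0 < x la := (by rw [hR] at hx; exact hx.2)
    calc ENNReal.ofReal (D x) * ENNReal.ofReal (T x)
        ≤ ENNReal.ofReal (D x) * 1 := by
          refine mul_le_mul_right ?_ _
          exact ENNReal.ofReal_le_one.mpr (tprod_le_one' (hh0 _ hxl) (fun i => hh1 _ i))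
      _ = ENNReal.ofReal (D x) := mul_one _
  -- identify the Bochner integral with Linf.toReal
  have hTae : AEMeasurable T (volume.restrict R) := by
    refine aemeasurable_of_tendsto_metrizable_ae atTop
      (fun n => (hgmeas n).aemeasurable) ?_
    filter_upwards [ae_restrict_mem hRmeas] with x hx
    exact hlimreal x hx
  have hbochner : (∫ x in R, D x * T x ∂(volume)) = Linf.toReal := by
    rw [hLinf]
    rw [integral_eq_lintegral_of_nonneg_ae ?_ ?_]
    · congr 1
      refine lintegral_congr_ae ?_
      filter_upwards [ae_restrict_mem hRmeas] with x hx
      rw [ENNReal.ofReal_mul (hD0 x)]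
    · filter_upwards [ae_restrict_mem hRmeas] with x hx
      have hxl : 0 < x la := (by rw [hR] at hx; exact hx.2)
      exact mul_nonneg (hD0 x) (tprod_nonneg' (hh0 _ hxl) (fun i => hh1 _ i))
    · exact (hDmeas.aemeasurable.mul hTae).aestronglyMeasurable
  -- conclude
  have hfinal := (ENNReal.tendsto_toReal hLinf_ne).comp htendsto
  have hbochner2 : (∫ x in R,
      (∏ j : Fin k, θ (a j) * Real.exp (-(θ (a j)) * x j)) *
        ∏' i : ℕ, (if i ∈ A then 1 else 1 - Real.exp (-(θ i) * x la)) ∂(volume))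
      = Linf.toReal := hbochner
  rw [hbochner2]
  refine hfinal.congr fun n => ?_
  simp only [Function.comp]
  rw [key n]
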